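/- If a complex number z ≠ 0 satisfies |z| < 1 and |arg z| ≤ π/2 (i.e., Re z ≥ 0), then for every α ∈ (0, π/2), Re{e^{j(α−π/2)}(j + z)} > 0; i.e., region R2 (the open unit half-disk in the closed right half-plane) satisfies the decentralized stability half-plane condition. -/

import Mathlib

/-- If z ≠ 0 satisfies |z| < 1 and |arg z| ≤ π/2 (i.e. Re z ≥ 0), then for
every α ∈ (0, π/2), Re{e^{j(α−π/2)}(j + z)} > 0: region R2 (open unit half-disk in the
closed right half-plane) satisfies the decentralized stability half-plane condition. -/
theorem region_R2_stability (α : ℝ) (hα0 : 0 < α) (hα1 : α < Real.pi / 2)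
    (z : ℂ) (hz0 : z ≠ 0) (hz1 : ‖z‖ < 1)
    (hz2 : |Complex.arg z| ≤ Real.pi / 2) :
    0 < (Complex.exp ((↑(α - Real.pi / 2)) * Complex.I) * (Complex.I + z)).re := by
  have hre : 0 ≤ z.re := Complex.abs_arg_le_pi_div_two_iff.mp hz2
  have him : |z.im| < 1 := lt_of_le_of_lt (Complex.abs_im_le_norm z) hz1
  have h1 : -1 < z.im := (abs_lt.mp him).1
  have hs : 0 < Real.sin α := Real.sin_pos_of_pos_of_lt_pi hα0 (by linarith [Real.pi_pos])
  have hc : 0 < Real.cos α := Real.cos_pos_of_mem_Ioo ⟨by linarith [Real.pi_pos], hα1⟩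
  simp [Complex.exp_re, Complex.exp_im, Complex.mul_re, Complex.add_re, Complex.add_im,
    Real.cos_sub, Real.sin_sub, Real.cos_pi_div_two, Real.sin_pi_div_two]
  nlinarith
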